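/- In the sum-intersection setting, for each A ∈ S_L: (i) r_A and β^A are, respectively, the optimal value and the optimal solution of: maximize over θ ∈ ℝ^d the quantity min_{1≤ℓ≤L} (1/ℓ) Σ_{i=L−ℓ+1}^d |θ|_{(i)}, subject to Λ(θ) ≤ 0, θ_k ≥ 0 for k ∈ A, and θ_{k'} ≤ 0 for k' ∉ A, where |θ|_{(1)} ≥ … ≥ |θ|_{(d)} is the decreasing rearrangement of (|θ_1|, …, |θ_d|). (ii) For each γ ∈ ℝ^d with Λ(γ) ≤ 0, v_A(γ) is bounded below by the optimal value of the same maximization with the constraint Λ(θ) ≤ 0 replaced by Λ(θ − γ) ≤ 0. -/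

import Mathlib

open MeasureTheory ProbabilityTheory Filter Set Topology
open scoped ENNReal Pointwise RealInnerProductSpace Classical

noncomputable section

namespace Paper

abbrev Vec (d : ℕ) := EuclideanSpace ℝ (Fin d)

variable {d : ℕ}

/-- The cone generated by a set: `{λ x : λ > 0, x ∈ A}`. -/
def cone (A : Set (Vec d)) : Set (Vec d) := {y | ∃ l : ℝ, 0 < l ∧ ∃ x ∈ A, y = l • x}

variable {Ω : Type*} [MeasurableSpace Ω]

/-- The random walk `S_n = X_0 + ⋯ + X_{n-1}`. -/
def S (X : ℕ → Ω → Vec d) (n : ℕ) (ω : Ω) : Vec d := ∑ i ∈ Finset.range n, X i ω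

/-- The cumulant generating function `Λ(θ) = log E[exp⟪θ, X₁⟫]` (real-valued on its domain). -/
def cgf (P : Measure Ω) (X : ℕ → Ω → Vec d) (θ : Vec d) : ℝ :=
  Real.log (∫ ω, Real.exp ⟪θ, X 0 ω⟫ ∂P)

/-- `θ` belongs to the effective domain of `Λ`. -/
def InDom (P : Measure Ω) (X : ℕ → Ω → Vec d) (θ : Vec d) : Prop :=
  Integrable (fun ω => Real.exp ⟪θ, X 0 ω⟫) P

/-- The effective domain of the Legendre–Fenchel conjugate `Λ*`. -/
def domConj (P : Measure Ω) (X : ℕ → Ω → Vec d) : Set (Vec d) :=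
  {x | BddAbove ((fun θ => ⟪θ, x⟫ - cgf P X θ) '' {θ | InDom P X θ})}

/-- The rate function `I(x) = sup{θ·x : Λ(θ) ≤ 0}`, valued in `[0,∞]`. -/
def rate (P : Measure Ω) (X : ℕ → Ω → Vec d) (x : Vec d) : ℝ≥0∞ :=
  ⨆ θ ∈ {θ : Vec d | InDom P X θ ∧ cgf P X θ ≤ 0}, ENNReal.ofReal ⟪θ, x⟫

/-- `r_W = inf_{x ∈ W} I(x)`. -/
def rOf (P : Measure Ω) (X : ℕ → Ω → Vec d) (W : Set (Vec d)) : ℝ≥0∞ :=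
  ⨅ x ∈ W, rate P X x

/-- The first hitting time of `b • W` by the random walk. -/
def hit (X : ℕ → Ω → Vec d) (W : Set (Vec d)) (b : ℝ) (ω : Ω) : ℕ∞ :=
  ⨅ (n : ℕ) (_ : S X n ω ∈ b • W), (n : ℕ∞)

/-- The basic i.i.d. random walk hypotheses. -/
def IIDWalk (P : Measure Ω) (X : ℕ → Ω → Vec d) : Prop :=
  IsProbabilityMeasure P ∧ (∀ n, Measurable (X n)) ∧
    iIndepFun X P ∧ ∀ n, P.map (X n) = P.map (X 0)

/-- The exponentially tilted step distribution `μ_θ`. -/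
def tiltedLaw (P : Measure Ω) (X : ℕ → Ω → Vec d) (θ : Vec d) : Measure (Vec d) :=
  (P.map (X 0)).withDensity fun x => ENNReal.ofReal (Real.exp (⟪θ, x⟫ - cgf P X θ))

/-- `Q θ` is, for each `θ ∈ dom Λ`, a probability measure under which the increments
are i.i.d. with the tilted law `μ_θ`, i.e. `Q θ = ℙ_θ`. -/
def IsTiltedFamily (P : Measure Ω) (X : ℕ → Ω → Vec d) (Q : Vec d → Measure Ω) : Prop :=
  ∀ θ : Vec d, InDom P X θ →
    IsProbabilityMeasure (Q θ) ∧
    iIndepFun X (Q θ) ∧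
    ∀ n, (Q θ).map (X n) = tiltedLaw P X θ

/-- The likelihood ratio `L_θ(T) = exp(θ·S_T − T Λ(θ)) 1{T < ∞}`. -/
def LR (P : Measure Ω) (X : ℕ → Ω → Vec d) (θ : Vec d) (T : Ω → ℕ∞) (ω : Ω) : ℝ :=
  if T ω = ⊤ then 0
  else Real.exp (⟪θ, S X (T ω).toNat ω⟫ - ((T ω).toNat : ℝ) * cgf P X θ)

/-- `V_θ(x) = sup{α·x : Λ(θ) + Λ(α−θ) ≤ 0}`, with `sup ∅ = −∞`. -/
def Vfun (P : Measure Ω) (X : ℕ → Ω → Vec d) (θ x : Vec d) : EReal :=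
  ⨆ α ∈ {α : Vec d | InDom P X θ ∧ InDom P X (α - θ) ∧ cgf P X θ + cgf P X (α - θ) ≤ 0},
    ((⟪α, x⟫ : ℝ) : EReal)

/-- `v(W; θ) = inf_{x ∈ cl W} V_θ(x)`. -/
def vOf (P : Measure Ω) (X : ℕ → Ω → Vec d) (W : Set (Vec d)) (θ : Vec d) : EReal :=
  ⨅ x ∈ closure W, Vfun P X θ x

/-- The mixture measure `ℙ_Θ = |Θ|⁻¹ ∑_{θ∈Θ} ℙ_θ`. -/
def mix (Q : Vec d → Measure Ω) (Θ : Finset (Vec d)) : Measure Ω :=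
  (Θ.card : ℝ≥0∞)⁻¹ • ∑ θ ∈ Θ, Q θ

/-- Second moment `E_μ[f²]`. -/
def mom2 (μ : Measure Ω) (f : Ω → ℝ) : ℝ :=
  (∫⁻ ω, ENNReal.ofReal ((f ω) ^ 2) ∂μ).toReal

variable {J : ℕ}

/-- `τ_b^* = min_{j ∈ [J]} τ_b^j`. -/
def tauStar (X : ℕ → Ω → Vec d) (W : Fin J → Set (Vec d)) (b : ℝ) (ω : Ω) : ℕ∞ :=
  ⨅ j, hit X (W j) b ω

/-- The wrong-exit event `{τ_b^* < τ_b^0}`. -/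
def wrongExit (X : ℕ → Ω → Vec d) (W0 : Set (Vec d)) (W : Fin J → Set (Vec d)) (b : ℝ) :
    Set Ω :=
  {ω | tauStar X W b ω < hit X W0 b ω}

/-- The event `{τ_b^* = τ_b^j}`. -/
def exitAt (X : ℕ → Ω → Vec d) (W : Fin J → Set (Vec d)) (j : Fin J) (b : ℝ) : Set Ω :=
  {ω | tauStar X W b ω = hit X (W j) b ω}

/-- The estimator `Ŵ_b^j(θ)`. -/
def WhatJ (P : Measure Ω) (X : ℕ → Ω → Vec d) (W0 : Set (Vec d)) (W : Fin J → Set (Vec d))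
    (θ : Vec d) (j : Fin J) (b : ℝ) : Ω → ℝ :=
  Set.indicator (wrongExit X W0 W b ∩ exitAt X W j b)
    (fun ω => (LR P X θ (tauStar X W b) ω)⁻¹)

/-- The mixture estimator `Ŵ_b(Θ)`. -/
def WhatMix (P : Measure Ω) (X : ℕ → Ω → Vec d) (W0 : Set (Vec d)) (W : Fin J → Set (Vec d))
    (Θ : Finset (Vec d)) (b : ℝ) : Ω → ℝ :=
  Set.indicator (wrongExit X W0 W b)
    (fun ω => ((Θ.card : ℝ)⁻¹ * ∑ θ ∈ Θ, LR P X θ (tauStar X W b) ω)⁻¹)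

/-- Asymptotic efficiency of the proposal `ℙ_Θ` for estimating `ℙ(τ_b^* < τ_b^0)`. -/
def AsympEff (P : Measure Ω) (X : ℕ → Ω → Vec d) (W0 : Set (Vec d))
    (W : Fin J → Set (Vec d)) (Q : Vec d → Measure Ω) (Θ : Finset (Vec d)) : Prop :=
  Tendsto (fun b : ℝ =>
      Real.log (mom2 (mix Q Θ) (WhatMix P X W0 W Θ b)) /
        (2 * Real.log ((P (wrongExit X W0 W b)).toReal)))
    atTop (nhds 1)

/-- Condition (C1). -/
def C1 (P : Measure Ω) (X : ℕ → Ω → Vec d) (W : Fin J → Set (Vec d)) : Prop :=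
  ∃ δ > (0 : ℝ), ∀ j, cone (Metric.ball (∫ ω, X 0 ω ∂P) δ) ∩ W j = ∅

/-- Condition (C2). -/
def C2 (P : Measure Ω) (X : ℕ → Ω → Vec d) (W : Fin J → Set (Vec d)) : Prop :=
  IsOpen {θ : Vec d | InDom P X θ} ∧
    ∀ j, (interior (cone (domConj P X)) ∩ W j).Nonempty

/-- Condition (C3). -/
def C3 (W0 : Set (Vec d)) (W : Fin J → Set (Vec d)) : Prop :=
  (∀ j j', j ≠ j' → cone (W j) ∩ cone (W j') = ∅) ∧
  (∀ j, cone W0 ∩ cone (W j) = ∅) ∧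
  ∃ δ > (0 : ℝ), Metric.ball (0 : Vec d) δ ∩ W0 = ∅ ∧
    ∀ j, Metric.ball (0 : Vec d) δ ∩ W j = ∅

/-- Condition (C4). -/
def C4 (P : Measure Ω) (X : ℕ → Ω → Vec d) (W0 : Set (Vec d))
    (W : Fin J → Set (Vec d)) : Prop :=
  (∀ j j', j ≠ j' → closure (cone (W j)) ∩ closure (cone (W j')) = {0}) ∧
  (W0 = ∅ ∨ ∀ j, closure (cone W0) ∩ closure (cone (W j)) = {0}) ∧
  (W0 = ∅ ∨ (Convex ℝ W0 ∧ (interior (cone (domConj P X)) ∩ W0).Nonempty))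

/-- The sets `W^0, W^1, …, W^J` are open and pairwise disjoint, with `W^1, …, W^J` convex. -/
def GoodSets (W0 : Set (Vec d)) (W : Fin J → Set (Vec d)) : Prop :=
  IsOpen W0 ∧ (∀ j, IsOpen (W j)) ∧ (∀ j, Convex ℝ (W j)) ∧
  (∀ j, Disjoint W0 (W j)) ∧ ∀ j j', j ≠ j' → Disjoint (W j) (W j')

/-- `β` is the optimal tilting associated with the region `Wj` (Definition 3.1). -/
def IsOptTilt (P : Measure Ω) (X : ℕ → Ω → Vec d) (Wj : Set (Vec d)) (β : Vec d) : Prop :=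
  InDom P X β ∧ cgf P X β = 0 ∧
  (∀ v ∈ Wj, ((rOf P X Wj : ℝ≥0∞) : EReal) ≤ ((⟪β, v⟫ : ℝ) : EReal)) ∧
  (∀ x : Vec d, rate P X x ≤ rOf P X Wj →
    ((⟪β, x⟫ : ℝ) : EReal) ≤ ((rOf P X Wj : ℝ≥0∞) : EReal))

/-! ### The sum-intersection rule -/

/-- The increasing rearrangement of `(|θ_1|, …, |θ_d|)`; `sortedAbs θ i` is the
`(i+1)`-th smallest of the absolute values of the coordinates of `θ`. -/
def sortedAbs (θ : Vec d) : Fin d → ℝ :=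
  (fun j => |θ j|) ∘ Tuple.sort (fun j => |θ j|)

/-- The sum of the `c` smallest absolute values of the coordinates of `θ`. -/
def lowSum (θ : Vec d) (c : ℕ) : ℝ :=
  ∑ j : Fin d, if (j : ℕ) < c then sortedAbs θ j else 0

/-- `Σ_{i=a}^{b} |θ|_{(i)}`, where `|θ|_{(1)} ≥ … ≥ |θ|_{(d)}` is the decreasing
rearrangement of the absolute values of the coordinates (1-indexed). -/
def rangeSumAbs (θ : Vec d) (a b : ℕ) : ℝ :=
  lowSum θ (d - a + 1) - lowSum θ (d - b)

/-- The objective `min_{1 ≤ ℓ ≤ L} (1/ℓ) Σ_{i=L-ℓ+1}^{top} |θ|_{(i)}`. -/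
def objSI (L top : ℕ) (θ : Vec d) : ℝ :=
  sInf {y : ℝ | ∃ l : ℕ, 1 ≤ l ∧ l ≤ L ∧ y = (l : ℝ)⁻¹ * rangeSumAbs θ (L - l + 1) top}

/-- The region `W^A` of the sum-intersection rule. -/
def WSI (L : ℕ) (A : Finset (Fin d)) : Set (Vec d) :=
  {x | (∀ k ∈ A, 0 < x k) ∧ (∀ k ∉ A, x k < 0) ∧
    ∀ B : Finset (Fin d), B.card = L → 1 < ∑ k ∈ B, |x k|}

/-- The set `W^0 = ∪_{A ∉ S_L} W^A` of the sum-intersection rule. -/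
def WSI0 (L : ℕ) : Set (Vec d) :=
  ⋃ (A : Finset (Fin d)) (_ : A.card < L), WSI L A

/-- `τ_b^* = min_{A ∈ S_L} τ_b^A` for the sum-intersection rule. -/
def tauSIStar (X : ℕ → Ω → Vec d) (L : ℕ) (b : ℝ) (ω : Ω) : ℕ∞ :=
  ⨅ (A : Finset (Fin d)) (_ : L ≤ A.card), hit X (WSI L A) b ω

/-- The wrong-exit event `{τ_b^* < τ_b^0}` for the sum-intersection rule. -/
def wrongExitSI (X : ℕ → Ω → Vec d) (L : ℕ) (b : ℝ) : Set Ω :=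
  {ω | tauSIStar X L b ω < hit X (WSI0 L) b ω}

/-- The mixture estimator `Ŵ_b(Θ)` for the sum-intersection rule. -/
def WhatSI (P : Measure Ω) (X : ℕ → Ω → Vec d) (L : ℕ) (Θ : Finset (Vec d)) (b : ℝ) :
    Ω → ℝ :=
  Set.indicator (wrongExitSI X L b)
    (fun ω => ((Θ.card : ℝ)⁻¹ * ∑ θ ∈ Θ, LR P X θ (tauSIStar X L b) ω)⁻¹)

/-- Asymptotic efficiency of `ℙ_Θ` for the sum-intersection rule. -/
def AsympEffSI (P : Measure Ω) (X : ℕ → Ω → Vec d) (L : ℕ) (Q : Vec d → Measure Ω)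
    (Θ : Finset (Vec d)) : Prop :=
  Tendsto (fun b : ℝ =>
      Real.log (mom2 (mix Q Θ) (WhatSI P X L Θ b)) /
        (2 * Real.log ((P (wrongExitSI X L b)).toReal)))
    atTop (nhds 1)

/-- The standing assumptions for the sum-intersection rule. -/
def SISetting (P : Measure Ω) (X : ℕ → Ω → Vec d) (L : ℕ) : Prop :=
  IIDWalk P X ∧ 2 ≤ L ∧ L + 1 ≤ d ∧
  (∀ k : Fin d, ∫ ω, X 0 ω k ∂P < 0) ∧
  IsOpen {θ : Vec d | InDom P X θ} ∧
  ∀ A : Finset (Fin d), L ≤ A.card →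
    (interior (cone (domConj P X)) ∩ WSI L A).Nonempty

/-- The feasible set of the optimization problem characterizing `r_A` and `β^A` for the
sum-intersection rule. -/
def SIFeas (P : Measure Ω) (X : ℕ → Ω → Vec d) (A : Finset (Fin d)) (θ : Vec d) : Prop :=
  InDom P X θ ∧ cgf P X θ ≤ 0 ∧ (∀ k ∈ A, 0 ≤ θ k) ∧ ∀ k ∉ A, θ k ≤ 0

/-- The feasible set of the problem defining `z_A` and `γ^A` (support in `A`). -/
def SIFeasSupp (P : Measure Ω) (X : ℕ → Ω → Vec d) (A : Finset (Fin d)) (θ : Vec d) :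
    Prop :=
  InDom P X θ ∧ cgf P X θ ≤ 0 ∧ (∀ k ∈ A, 0 ≤ θ k) ∧ ∀ k ∉ A, θ k = 0

/-- `zv` and `γ` are the optimal value and a maximizer of `max |θ|_{(L)}` over
`SIFeasSupp A` (for `A` of cardinality `L`). -/
def IsSIOptL (P : Measure Ω) (X : ℕ → Ω → Vec d) (L : ℕ) (A : Finset (Fin d))
    (zv : ℝ) (γ : Vec d) : Prop :=
  SIFeasSupp P X A γ ∧ rangeSumAbs γ L L = zv ∧
    ∀ θ, SIFeasSupp P X A θ → rangeSumAbs θ L L ≤ zv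

/-- `sv` is the optimal value of `max min_{1≤ℓ≤L} (1/ℓ) Σ_{i=L-ℓ+1}^{L+1} |θ|_{(i)}` over
`SIFeasSupp B` (for `B` of cardinality `L+1`). -/
def IsSIOptL1 (P : Measure Ω) (X : ℕ → Ω → Vec d) (L : ℕ) (B : Finset (Fin d))
    (sv : ℝ) : Prop :=
  (∃ γ, SIFeasSupp P X B γ ∧ objSI L (L + 1) γ = sv) ∧
    ∀ θ, SIFeasSupp P X B θ → objSI L (L + 1) θ ≤ sv

/-- `r_* = min_{A ∈ S_L} r_A`. -/
def rStarSI (P : Measure Ω) (X : ℕ → Ω → Vec d) (L : ℕ) : ℝ≥0∞ :=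
  ⨅ (A : Finset (Fin d)) (_ : L ≤ A.card), rOf P X (WSI L A)

/-! ### Auxiliary lemmas for the sum-intersection optimization -/

section SIAux

lemma filter_coe_card (dd c : ℕ) :
    (Finset.univ.filter fun i : Fin dd => c ≤ (i : ℕ)).card = dd - c := by
  rw [Finset.card_filter]
  rw [show (∑ i : Fin dd, if c ≤ (i : ℕ) then 1 else 0) =
      ∑ n ∈ Finset.range dd, (if c ≤ n then 1 else 0) from
    Fin.sum_univ_eq_sum_range (fun n => if c ≤ n then 1 else 0) dd]
  rw [← Finset.card_filter]
  rw [show (Finset.range dd).filter (fun n => c ≤ n) = Finset.Ico c dd by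
    ext n; simp only [Finset.mem_filter, Finset.mem_range, Finset.mem_Ico]; omega]
  exact Nat.card_Ico _ _

/-- Abel-summation lower bound: the core inequality of the LP argument. -/
lemma abel_bound (dd L : ℕ) (A Z : ℕ → ℝ)
    (hA0 : ∀ n, 0 ≤ A n)
    (hZd : ∀ n, dd ≤ n → Z n = 0)
    (hZa : ∀ n, Z (n + 1) ≤ Z n)
    (hcon : 1 ≤ ∑ i ∈ Finset.Ico (dd - L) dd, Z i)
    (m : ℝ) (hm0 : 0 ≤ m)
    (hm : ∀ l : ℕ, 1 ≤ l → l ≤ L → (l : ℝ) * m ≤ ∑ i ∈ Finset.range (dd - L + l), A i) :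
    m ≤ ∑ i ∈ Finset.range dd, A i * Z i := by
  have hZeq : ∀ n, n ≤ dd → Z n = ∑ j ∈ Finset.Ico n dd, (Z j - Z (j + 1)) := by
    intro n hn
    rw [Finset.sum_Ico_eq_sub _ hn, Finset.sum_range_sub' Z, Finset.sum_range_sub' Z,
      hZd dd le_rfl]
    ring
  have key1 : ∑ i ∈ Finset.range dd, A i * Z i =
      ∑ j ∈ Finset.range dd, (∑ i ∈ Finset.range (j + 1), A i) * (Z j - Z (j + 1)) := by
    calc ∑ i ∈ Finset.range dd, A i * Z i
        = ∑ i ∈ Finset.range dd, ∑ j ∈ Finset.Ico i dd, A i * (Z j - Z (j + 1)) := by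
          refine Finset.sum_congr rfl fun i hi => ?_
          rw [← Finset.mul_sum, ← hZeq i (le_of_lt (Finset.mem_range.1 hi))]
      _ = ∑ j ∈ Finset.range dd, ∑ i ∈ Finset.range (j + 1), A i * (Z j - Z (j + 1)) := by
          refine Finset.sum_comm' fun x y => ?_
          simp only [Finset.mem_range, Finset.mem_Ico]; omega
      _ = _ := by
          refine Finset.sum_congr rfl fun j hj => ?_
          rw [Finset.sum_mul]
  have key2 : ∑ i ∈ Finset.Ico (dd - L) dd, Z i =
      ∑ j ∈ Finset.range dd, ((j + 1 - (dd - L) : ℕ) : ℝ) * (Z j - Z (j + 1)) := by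
    calc ∑ i ∈ Finset.Ico (dd - L) dd, Z i
        = ∑ i ∈ Finset.Ico (dd - L) dd, ∑ j ∈ Finset.Ico i dd, (Z j - Z (j + 1)) := by
          refine Finset.sum_congr rfl fun i hi => hZeq i (le_of_lt (Finset.mem_Ico.1 hi).2)
      _ = ∑ j ∈ Finset.range dd, ∑ _i ∈ Finset.Ico (dd - L) (j + 1), (Z j - Z (j + 1)) := by
          refine Finset.sum_comm' fun x y => ?_
          simp only [Finset.mem_range, Finset.mem_Ico]; omega
      _ = _ := by
          refine Finset.sum_congr rfl fun j hj => ?_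
          rw [Finset.sum_const, Nat.card_Ico, nsmul_eq_mul]
  have hδ0 : ∀ j, 0 ≤ Z j - Z (j + 1) := fun j => sub_nonneg.2 (hZa j)
  have hstep : ∀ j ∈ Finset.range dd,
      ((j + 1 - (dd - L) : ℕ) : ℝ) * m * (Z j - Z (j + 1)) ≤
        (∑ i ∈ Finset.range (j + 1), A i) * (Z j - Z (j + 1)) := by
    intro j hj
    refine mul_le_mul_of_nonneg_right ?_ (hδ0 j)
    rcases Nat.lt_or_ge j (dd - L) with h | h
    · have : j + 1 - (dd - L) = 0 := by omega
      rw [this]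
      simpa using Finset.sum_nonneg fun i _ => hA0 i
    · have h1 : 1 ≤ j + 1 - (dd - L) := by omega
      have h2 : j + 1 - (dd - L) ≤ L := by
        have := Finset.mem_range.1 hj; omega
      have h3 : dd - L + (j + 1 - (dd - L)) = j + 1 := by omega
      have := hm _ h1 h2
      rwa [h3] at this
  calc m = m * 1 := (mul_one m).symm
    _ ≤ m * ∑ i ∈ Finset.Ico (dd - L) dd, Z i := mul_le_mul_of_nonneg_left hcon hm0
    _ = ∑ j ∈ Finset.range dd, ((j + 1 - (dd - L) : ℕ) : ℝ) * m * (Z j - Z (j + 1)) := by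
        rw [key2, Finset.mul_sum]
        exact Finset.sum_congr rfl fun j _ => by ring
    _ ≤ ∑ j ∈ Finset.range dd, (∑ i ∈ Finset.range (j + 1), A i) * (Z j - Z (j + 1)) :=
        Finset.sum_le_sum hstep
    _ = ∑ i ∈ Finset.range dd, A i * Z i := key1.symm

variable {d : ℕ}

lemma sortedAbs_nonneg (θ : Vec d) (i : Fin d) : 0 ≤ sortedAbs θ i := abs_nonneg _

lemma lowSum_zero (θ : Vec d) : lowSum θ 0 = 0 := by
  simp [lowSum]

lemma lowSum_nonneg (θ : Vec d) (c : ℕ) : 0 ≤ lowSum θ c := by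
  refine Finset.sum_nonneg fun j _ => ?_
  split
  · exact sortedAbs_nonneg θ j
  · exact le_rfl

lemma sum_range_ite (F : ℕ → ℝ) {c dd : ℕ} (hc : c ≤ dd) :
    ∑ n ∈ Finset.range dd, (if n < c then F n else 0) = ∑ n ∈ Finset.range c, F n := by
  rw [← Finset.sum_subset (Finset.range_subset_range.2 hc)
      (fun x _ hx => if_neg (by simpa using hx))]
  exact Finset.sum_congr rfl fun n hn => if_pos (Finset.mem_range.1 hn)

lemma lowSum_eq (θ : Vec d) {c : ℕ} (hc : c ≤ d) :
    lowSum θ c = ∑ n ∈ Finset.range c, (if h : n < d then sortedAbs θ ⟨n, h⟩ else 0) := by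
  have h1 : lowSum θ c =
      ∑ n ∈ Finset.range d,
        (fun n => if n < c then (if h : n < d then sortedAbs θ ⟨n, h⟩ else 0) else 0) n :=
    calc lowSum θ c
        = ∑ j : Fin d,
            (fun n => if n < c then (if h : n < d then sortedAbs θ ⟨n, h⟩ else 0) else 0)
              ((j : ℕ)) :=
          Finset.sum_congr rfl fun j _ => by by_cases h : (j : ℕ) < c <;> simp [h, j.isLt]
      _ = _ := Fin.sum_univ_eq_sum_range
        (fun n => if n < c then (if h : n < d then sortedAbs θ ⟨n, h⟩ else 0) else 0) d
  rw [h1, sum_range_ite _ hc]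

lemma rangeSumAbs_eq (θ : Vec d) {l L : ℕ} (h1 : 1 ≤ l) (h2 : l ≤ L) (h3 : L ≤ d) :
    rangeSumAbs θ (L - l + 1) d = lowSum θ (d - L + l) := by
  rw [rangeSumAbs, show d - (L - l + 1) + 1 = d - L + l by omega, Nat.sub_self, lowSum_zero,
    sub_zero]

lemma objSI_mem_nonneg (θ : Vec d) {L : ℕ} (h3 : L ≤ d) :
    ∀ y ∈ {y : ℝ | ∃ l : ℕ, 1 ≤ l ∧ l ≤ L ∧ y = (l : ℝ)⁻¹ * rangeSumAbs θ (L - l + 1) d},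
      0 ≤ y := by
  rintro y ⟨l, h1, h2, rfl⟩
  rw [rangeSumAbs_eq θ h1 h2 h3]
  exact mul_nonneg (inv_nonneg.2 (Nat.cast_nonneg l)) (lowSum_nonneg θ _)

lemma objSI_nonneg (θ : Vec d) {L : ℕ} (h1 : 1 ≤ L) (h3 : L ≤ d) : 0 ≤ objSI L d θ :=
  le_csInf ⟨_, ⟨1, le_rfl, h1, rfl⟩⟩ (objSI_mem_nonneg θ h3)

lemma objSI_le_aux (θ : Vec d) {l L : ℕ} (h1 : 1 ≤ l) (h2 : l ≤ L) (h3 : L ≤ d) :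
    objSI L d θ ≤ (l : ℝ)⁻¹ * lowSum θ (d - L + l) := by
  rw [← rangeSumAbs_eq θ h1 h2 h3]
  exact csInf_le ⟨0, objSI_mem_nonneg θ h3⟩ ⟨l, h1, h2, rfl⟩

lemma subset_sum_perm {w : Fin d → ℝ} {L : ℕ}
    (hsum : ∀ B : Finset (Fin d), B.card = L → 1 ≤ ∑ k ∈ B, w k) (e : Equiv.Perm (Fin d)) :
    ∀ B : Finset (Fin d), B.card = L → 1 ≤ ∑ i ∈ B, w (e i) := by
  intro B hB
  rw [← Finset.sum_image (fun x _ y _ h => e.injective h)]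
  exact hsum _ (by rw [Finset.card_image_of_injective _ e.injective, hB])

/-- The key combinatorial inequality: if every `L`-subset of the `w`'s sums to at least `1`
then `∑ |θ_k| w_k` is at least `objSI L d θ`. -/
lemma key_ineq {L : ℕ} (hL1 : 1 ≤ L) (hLd : L ≤ d) (θ : Vec d) (w : Fin d → ℝ)
    (hw0 : ∀ i, 0 ≤ w i)
    (hsum : ∀ B : Finset (Fin d), B.card = L → 1 ≤ ∑ k ∈ B, w k) :
    objSI L d θ ≤ ∑ k : Fin d, |θ k| * w k := by
  classical
  set σ : Equiv.Perm (Fin d) := Tuple.sort (fun k => |θ k|) with hσ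
  have ha_mono : Monotone (sortedAbs θ) := Tuple.monotone_sort (fun k => |θ k|)
  set w' : Fin d → ℝ := fun i => w (σ i) with hw'
  have hEq1 : ∑ k : Fin d, |θ k| * w k = ∑ i : Fin d, sortedAbs θ i * w' i :=
    (Equiv.sum_comp σ (fun k => |θ k| * w k)).symm
  have hsum' : ∀ B : Finset (Fin d), B.card = L → 1 ≤ ∑ i ∈ B, w' i :=
    subset_sum_perm hsum σ
  set τ : Equiv.Perm (Fin d) := Tuple.sort w' with hτ
  set z : Fin d → ℝ := fun i => w' (τ (Fin.rev i)) with hz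
  have hz_anti : Antitone z := fun i j hij => Tuple.monotone_sort w' (Fin.rev_le_rev.2 hij)
  have hz0 : ∀ i, 0 ≤ z i := fun i => hw0 _
  have hzsum : ∀ B : Finset (Fin d), B.card = L → 1 ≤ ∑ i ∈ B, z i :=
    subset_sum_perm hsum' ((Fin.revPerm).trans τ)
  have hrearr : ∑ i : Fin d, sortedAbs θ i * z i ≤ ∑ i : Fin d, sortedAbs θ i * w' i := by
    have hav : Antivary (sortedAbs θ) z := by
      intro i j hij
      rcases le_total i j with h | h
      · exact absurd hij (not_lt.2 (hz_anti h))
      · exact ha_mono h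
    calc ∑ i, sortedAbs θ i * z i
        ≤ ∑ i, sortedAbs θ i * z ((τ.symm.trans Fin.revPerm) i) :=
          hav.sum_mul_le_sum_mul_comp_perm
      _ = ∑ i, sortedAbs θ i * w' i := by
          refine Finset.sum_congr rfl fun i _ => ?_
          congr 1
          show w' (τ (Fin.rev (Fin.rev (τ.symm i)))) = w' i
          rw [Fin.rev_rev, Equiv.apply_symm_apply]
  have hmain := abel_bound d L (fun n => if h : n < d then sortedAbs θ ⟨n, h⟩ else 0)
      (fun n => if h : n < d then z ⟨n, h⟩ else 0) ?_ ?_ ?_ ?_ (objSI L d θ)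
      (objSI_nonneg θ hL1 hLd) ?_
  · have hconv : ∑ i : Fin d, sortedAbs θ i * z i =
        ∑ n ∈ Finset.range d,
          (fun n => (if h : n < d then sortedAbs θ ⟨n, h⟩ else 0) *
            (if h : n < d then z ⟨n, h⟩ else 0)) n :=
      calc ∑ i : Fin d, sortedAbs θ i * z i
          = ∑ j : Fin d,
              (fun n => (if h : n < d then sortedAbs θ ⟨n, h⟩ else 0) *
                (if h : n < d then z ⟨n, h⟩ else 0)) ((j : ℕ)) :=
            Finset.sum_congr rfl fun j _ => by simp [j.isLt]
        _ = _ := Fin.sum_univ_eq_sum_range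
          (fun n => (if h : n < d then sortedAbs θ ⟨n, h⟩ else 0) *
            (if h : n < d then z ⟨n, h⟩ else 0)) d
    exact le_trans (le_trans hmain (le_of_eq hconv.symm)) (hEq1 ▸ hrearr)
  · intro n; split
    · exact sortedAbs_nonneg θ _
    · exact le_rfl
  · intro n hn; rw [dif_neg (by omega)]
  · intro n
    by_cases h1 : n + 1 < d
    · rw [dif_pos h1, dif_pos (by omega : n < d)]
      exact hz_anti (Fin.mk_le_mk.2 (Nat.le_succ n))
    · rw [dif_neg h1]; split
      · exact hz0 _
      · exact le_rfl
  · have e : (∑ i ∈ Finset.univ.filter (fun i : Fin d => d - L ≤ (i : ℕ)), z i) =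
        ∑ n ∈ Finset.Ico (d - L) d, (fun n => if h : n < d then z ⟨n, h⟩ else 0) n :=
      calc (∑ i ∈ Finset.univ.filter (fun i : Fin d => d - L ≤ (i : ℕ)), z i)
          = ∑ j : Fin d,
              (fun n => if d - L ≤ n then (if h : n < d then z ⟨n, h⟩ else 0) else 0)
                ((j : ℕ)) := by
            rw [Finset.sum_filter]
            exact Finset.sum_congr rfl fun j _ => by
              by_cases h : d - L ≤ (j : ℕ) <;> simp [h, j.isLt]
        _ = ∑ n ∈ Finset.range d,
              (if d - L ≤ n then (if h : n < d then z ⟨n, h⟩ else 0) else 0) :=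
            Fin.sum_univ_eq_sum_range
              (fun n => if d - L ≤ n then (if h : n < d then z ⟨n, h⟩ else 0) else 0) d
        _ = _ := by
            rw [show Finset.Ico (d - L) d = (Finset.range d).filter (fun n => d - L ≤ n) by
                ext n; simp only [Finset.mem_filter, Finset.mem_range, Finset.mem_Ico]; omega]
            rw [Finset.sum_filter]
    exact le_of_le_of_eq (hzsum _ (by rw [filter_coe_card]; omega)) e
  · intro l h1 h2
    have hl0 : (0 : ℝ) < l := by exact_mod_cast h1
    have hle := objSI_le_aux θ h1 h2 hLd
    calc (l : ℝ) * objSI L d θ ≤ (l : ℝ) * ((l : ℝ)⁻¹ * lowSum θ (d - L + l)) :=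
          mul_le_mul_of_nonneg_left hle hl0.le
      _ = lowSum θ (d - L + l) := by field_simp
      _ = _ := lowSum_eq θ (by omega)

lemma inner_eq_sum (θ x : Vec d) : ⟪θ, x⟫ = ∑ k : Fin d, θ k * x k := by
  simp [PiLp.inner_apply, RCLike.inner_apply, conj_trivial]
  exact Finset.sum_congr rfl fun _ _ => mul_comm _ _

lemma inner_abs_pattern (A : Finset (Fin d)) (θ x : Vec d)
    (h1 : ∀ k ∈ A, 0 ≤ θ k) (h2 : ∀ k ∉ A, θ k ≤ 0)
    (h3 : ∀ k ∈ A, 0 ≤ x k) (h4 : ∀ k ∉ A, x k ≤ 0) :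
    ⟪θ, x⟫ = ∑ k : Fin d, |θ k| * |x k| := by
  rw [inner_eq_sum]
  refine Finset.sum_congr rfl fun k _ => ?_
  by_cases hk : k ∈ A
  · rw [abs_of_nonneg (h1 k hk), abs_of_nonneg (h3 k hk)]
  · rw [abs_of_nonpos (h2 k hk), abs_of_nonpos (h4 k hk), neg_mul_neg]

lemma continuous_eval (k : Fin d) : Continuous fun y : Vec d => y k :=
  (EuclideanSpace.proj k).continuous

lemma mem_closure_WSI {L : ℕ} {A : Finset (Fin d)} {x : Vec d}
    (hx : x ∈ closure (WSI L A)) :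
    (∀ k ∈ A, 0 ≤ x k) ∧ (∀ k ∉ A, x k ≤ 0) ∧
      ∀ B : Finset (Fin d), B.card = L → 1 ≤ ∑ k ∈ B, |x k| := by
  refine ⟨fun k hk => ?_, fun k hk => ?_, fun B hB => ?_⟩
  · exact closure_minimal (fun y hy => le_of_lt (hy.1 k hk))
      (isClosed_le continuous_const (continuous_eval k)) hx
  · exact closure_minimal (fun y hy => le_of_lt (hy.2.1 k hk))
      (isClosed_le (continuous_eval k) continuous_const) hx
  · exact closure_minimal (fun y hy => le_of_lt (hy.2.2 B hB))
      (isClosed_le continuous_const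
        (continuous_finset_sum _ fun k _ => (continuous_eval k).abs)) hx

lemma eval_perturb (x : Vec d) (k : Fin d) (c : ℝ) (j : Fin d) :
    (x + c • EuclideanSpace.single k (1 : ℝ)) j = x j + (if j = k then c else 0) := by
  simp [EuclideanSpace.single_apply, mul_ite]

lemma WSI_perturb {L : ℕ} {A : Finset (Fin d)} {x : Vec d} (hx : x ∈ WSI L A)
    (k : Fin d) (c : ℝ) (hc : k ∈ A → 0 ≤ c) (hc' : k ∉ A → c ≤ 0) :
    x + c • EuclideanSpace.single k (1 : ℝ) ∈ WSI L A := by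
  obtain ⟨hx1, hx2, hx3⟩ := hx
  refine ⟨fun j hj => ?_, fun j hj => ?_, fun B hB => ?_⟩
  · rw [eval_perturb]
    split_ifs with h
    · have := hc (h ▸ hj)
      have := hx1 j hj
      linarith
    · simpa using hx1 j hj
  · rw [eval_perturb]
    split_ifs with h
    · have := hc' (h ▸ hj)
      have := hx2 j hj
      linarith
    · simpa using hx2 j hj
  · have hmono : ∀ j, |x j| ≤ |(x + c • EuclideanSpace.single k (1 : ℝ)) j| := by
      intro j
      rw [eval_perturb]
      split_ifs with h
      · subst h
        by_cases hk : j ∈ A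
        · have hcj := hc hk
          rw [abs_of_pos (hx1 j hk), abs_of_pos (by linarith [hx1 j hk])]
          linarith
        · have hcj := hc' hk
          rw [abs_of_neg (hx2 j hk), abs_of_neg (by linarith [hx2 j hk])]
          linarith
      · simp
    calc (1 : ℝ) < ∑ j ∈ B, |x j| := hx3 B hB
      _ ≤ _ := Finset.sum_le_sum fun j _ => hmono j

lemma inner_perturb (β x : Vec d) (k : Fin d) (c : ℝ) :
    ⟪β, x + c • EuclideanSpace.single k (1 : ℝ)⟫ = ⟪β, x⟫ + c * β k := by
  rw [inner_add_right, real_inner_smul_right, EuclideanSpace.inner_single_right]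
  simp

end SIAux

theorem statement14
    {d : ℕ} {Ω : Type*} [MeasurableSpace Ω] (P : Measure Ω) (X : ℕ → Ω → Vec d)
    (L : ℕ) (hSI : SISetting P X L)
    (A : Finset (Fin d)) (hA : L ≤ A.card)
    (βA : Vec d) (hβA : IsOptTilt P X (WSI L A) βA) :
    -- (i) `r_A` and `β^A` are the optimal value and an optimal solution
    ((∀ θ : Vec d, SIFeas P X A θ →
        ENNReal.ofReal (objSI L d θ) ≤ rOf P X (WSI L A)) ∧
      SIFeas P X A βA ∧
      ENNReal.ofReal (objSI L d βA) = rOf P X (WSI L A)) ∧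
    -- (ii) lower bound on `v_A(γ)`
    (∀ γ : Vec d, InDom P X γ → cgf P X γ ≤ 0 →
      ∀ θ : Vec d, InDom P X (θ - γ) → cgf P X (θ - γ) ≤ 0 →
        (∀ k ∈ A, 0 ≤ θ k) → (∀ k ∉ A, θ k ≤ 0) →
        ((ENNReal.ofReal (objSI L d θ) : ℝ≥0∞) : EReal) ≤ vOf P X (WSI L A) γ) := by
  obtain ⟨hIID, hL2, hLd1, hmean, hopen, hcone⟩ := hSI
  have hL1 : 1 ≤ L := le_trans one_le_two hL2
  have hLd : L ≤ d := by omega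
  obtain ⟨x₀, hx₀mem⟩ := hcone A hA
  have hx₀ : x₀ ∈ WSI L A := hx₀mem.2
  obtain ⟨hβdom, hβcgf, hβlow, hβup⟩ := hβA
  -- part (i)(a)
  have parta : ∀ θ : Vec d, SIFeas P X A θ →
      ENNReal.ofReal (objSI L d θ) ≤ rOf P X (WSI L A) := by
    intro θ hθ
    show ENNReal.ofReal (objSI L d θ) ≤ ⨅ x ∈ WSI L A, rate P X x
    refine le_iInf₂ fun x hxW => ?_
    have hkey : objSI L d θ ≤ ⟪θ, x⟫ := by
      rw [inner_abs_pattern A θ x hθ.2.2.1 hθ.2.2.2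
        (fun k hk => (hxW.1 k hk).le) (fun k hk => (hxW.2.1 k hk).le)]
      exact key_ineq hL1 hLd θ (fun k => |x k|) (fun k => abs_nonneg _)
        (fun B hB => (hxW.2.2 B hB).le)
    calc ENNReal.ofReal (objSI L d θ) ≤ ENNReal.ofReal ⟪θ, x⟫ :=
          ENNReal.ofReal_le_ofReal hkey
      _ ≤ ⨆ θ' ∈ {θ' : Vec d | InDom P X θ' ∧ cgf P X θ' ≤ 0}, ENNReal.ofReal ⟪θ', x⟫ :=
          le_iSup₂ (f := fun θ' (_ : θ' ∈ {θ' : Vec d | InDom P X θ' ∧ cgf P X θ' ≤ 0}) =>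
            ENNReal.ofReal ⟪θ', x⟫) θ ⟨hθ.1, hθ.2.1⟩
      _ = rate P X x := rfl
  -- the optimal value is finite
  have hrne : rOf P X (WSI L A) ≠ ⊤ := by
    intro htop
    have h := hβlow x₀ hx₀
    rw [htop] at h
    simp at h
  have hrreal : ∀ v ∈ WSI L A, (rOf P X (WSI L A)).toReal ≤ ⟪βA, v⟫ := by
    intro v hv
    have h := hβlow v hv
    have h2 := EReal.toReal_le_toReal h (EReal.coe_ennreal_ne_bot _) (EReal.coe_ne_top _)
    rwa [EReal.toReal_coe_ennreal, EReal.toReal_coe] at h2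
  have hr0 : (rOf P X (WSI L A)).toReal ≤ ⟪βA, x₀⟫ := hrreal x₀ hx₀
  -- sign conditions for βA
  have hperturb : ∀ k : Fin d, ∀ c : ℝ, (k ∈ A → 0 ≤ c) → (k ∉ A → c ≤ 0) →
      (rOf P X (WSI L A)).toReal ≤ ⟪βA, x₀⟫ + c * βA k := by
    intro k c h1 h2
    have h3 := hrreal _ (WSI_perturb hx₀ k c h1 h2)
    rwa [inner_perturb] at h3
  have hsignA : ∀ k ∈ A, 0 ≤ βA k := by
    intro k hk
    by_contra hneg
    push_neg at hneg
    have hbne : βA k ≠ 0 := ne_of_lt hneg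
    have h4 := hperturb k ((⟪βA, x₀⟫ - (rOf P X (WSI L A)).toReal + 1) / (-βA k))
      (fun _ => div_nonneg (by linarith) (by linarith)) (fun h => absurd hk h)
    have h5 : (⟪βA, x₀⟫ - (rOf P X (WSI L A)).toReal + 1) / (-βA k) * βA k =
        -(⟪βA, x₀⟫ - (rOf P X (WSI L A)).toReal + 1) := by
      rw [div_neg, neg_mul, div_mul_cancel₀ _ hbne]
    rw [h5] at h4
    linarith
  have hsignA' : ∀ k ∉ A, βA k ≤ 0 := by
    intro k hk
    by_contra hpos
    push_neg at hpos
    have hbne : βA k ≠ 0 := ne_of_gt hpos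
    have h4 := hperturb k (-((⟪βA, x₀⟫ - (rOf P X (WSI L A)).toReal + 1) / βA k))
      (fun h => absurd h hk)
      (fun _ => neg_nonpos.2 (div_nonneg (by linarith) hpos.le))
    have h5 : -((⟪βA, x₀⟫ - (rOf P X (WSI L A)).toReal + 1) / βA k) * βA k =
        -(⟪βA, x₀⟫ - (rOf P X (WSI L A)).toReal + 1) := by
      rw [neg_mul, div_mul_cancel₀ _ hbne]
    rw [h5] at h4
    linarith
  have hfeasβ : SIFeas P X A βA := ⟨hβdom, le_of_eq hβcgf, hsignA, hsignA'⟩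
  -- upper bound : r ≤ objSI βA
  have hup : rOf P X (WSI L A) ≤ ENNReal.ofReal (objSI L d βA) := by
    rw [ENNReal.le_ofReal_iff_toReal_le hrne (objSI_nonneg βA hL1 hLd)]
    refine le_csInf ⟨_, ⟨1, le_rfl, hL1, rfl⟩⟩ ?_
    rintro yv ⟨l, h1, h2, rfl⟩
    rw [rangeSumAbs_eq βA h1 h2 hLd]
    have hl0 : (0 : ℝ) < l := by exact_mod_cast h1
    set σ : Equiv.Perm (Fin d) := Tuple.sort (fun j => |βA j|) with hσ
    set T : ℝ := ∑ i : Fin d, sortedAbs βA i with hT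
    have hT0 : 0 ≤ T := Finset.sum_nonneg fun i _ => sortedAbs_nonneg βA i
    refine le_of_forall_pos_le_add fun ε hε => ?_
    set ε' : ℝ := ε / (T + 1) with hε'
    have hε'0 : 0 < ε' := div_pos hε (by linarith)
    set y : Fin d → ℝ :=
      fun k => if ((σ.symm k : ℕ)) < d - L + l then (l : ℝ)⁻¹ + ε' else ε' with hy
    have hy0 : ∀ k, 0 < y k := by
      intro k
      simp only [hy]
      split
      · have : (0 : ℝ) ≤ (l : ℝ)⁻¹ := inv_nonneg.2 hl0.le
        linarith
      · exact hε'0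
    set v : Vec d := WithLp.toLp 2 (fun k => (if k ∈ A then (1 : ℝ) else -1) * y k : Fin d → ℝ) with hv
    have hvapp : ∀ k, v k = (if k ∈ A then (1 : ℝ) else -1) * y k := fun _ => rfl
    have hvabs : ∀ k, |v k| = y k := by
      intro k
      rw [hvapp]
      by_cases hk : k ∈ A
      · rw [if_pos hk, one_mul]; exact abs_of_pos (hy0 k)
      · rw [if_neg hk, neg_one_mul, abs_neg]; exact abs_of_pos (hy0 k)
    have hvW : v ∈ WSI L A := by
      refine ⟨fun k hk => ?_, fun k hk => ?_, fun B hB => ?_⟩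
      · rw [hvapp, if_pos hk, one_mul]; exact hy0 k
      · rw [hvapp, if_neg hk, neg_one_mul]; exact neg_lt_zero.2 (hy0 k)
      · have hcards : (Finset.univ.filter
            (fun k : Fin d => d - L + l ≤ ((σ.symm k : ℕ)))).card = L - l := by
          rw [show Finset.univ.filter (fun k : Fin d => d - L + l ≤ ((σ.symm k : ℕ))) =
              (Finset.univ.filter (fun i : Fin d => d - L + l ≤ (i : ℕ))).image σ from ?_]
          · rw [Finset.card_image_of_injective _ σ.injective, filter_coe_card]
            omega
          · ext k
            simp only [Finset.mem_filter, Finset.mem_univ, true_and, Finset.mem_image]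
            constructor
            · intro h
              exact ⟨σ.symm k, h, σ.apply_symm_apply k⟩
            · rintro ⟨i, hi, rfl⟩
              rwa [σ.symm_apply_apply]
        have hcard2 : (B.filter (fun k => ¬ ((σ.symm k : ℕ)) < d - L + l)).card ≤ L - l := by
          refine le_trans (Finset.card_le_card ?_) (le_of_eq hcards)
          intro k hk
          exact Finset.mem_filter.2 ⟨Finset.mem_univ _,
            not_lt.1 (Finset.mem_filter.1 hk).2⟩
        have hcard1 : l ≤ (B.filter (fun k => ((σ.symm k : ℕ)) < d - L + l)).card := by
          have := Finset.card_filter_add_card_filter_not (s := B)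
            (p := fun k => ((σ.symm k : ℕ)) < d - L + l)
          omega
        have hsplit : ∑ k ∈ B, |v k| =
            ((B.filter (fun k => ((σ.symm k : ℕ)) < d - L + l)).card : ℝ) *
                ((l : ℝ)⁻¹ + ε') +
              ((B.filter (fun k => ¬ ((σ.symm k : ℕ)) < d - L + l)).card : ℝ) * ε' := by
          rw [Finset.sum_congr rfl fun k _ => hvabs k]
          rw [← Finset.sum_filter_add_sum_filter_not B
            (fun k => ((σ.symm k : ℕ)) < d - L + l)]
          congr 1
          · rw [Finset.sum_congr rfl fun k hk =>
              show y k = (l : ℝ)⁻¹ + ε' from by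
                simp only [hy]
                exact if_pos (Finset.mem_filter.1 hk).2]
            rw [Finset.sum_const, nsmul_eq_mul]
          · rw [Finset.sum_congr rfl fun k hk =>
              show y k = ε' from by
                simp only [hy]
                exact if_neg (Finset.mem_filter.1 hk).2]
            rw [Finset.sum_const, nsmul_eq_mul]
        rw [hsplit]
        have hc1 : (l : ℝ) ≤
            ((B.filter (fun k => ((σ.symm k : ℕ)) < d - L + l)).card : ℝ) := by
          exact_mod_cast hcard1
        have hinv : (l : ℝ) * (l : ℝ)⁻¹ = 1 := mul_inv_cancel₀ hl0.ne'
        nlinarith [hε'0, mul_le_mul_of_nonneg_right hc1 (inv_nonneg.2 hl0.le),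
          mul_pos (lt_of_lt_of_le hl0 hc1) hε'0,
          mul_nonneg (Nat.cast_nonneg
            ((B.filter (fun k => ¬ ((σ.symm k : ℕ)) < d - L + l)).card) : (0 : ℝ) ≤ _)
            hε'0.le]
    have hinner : ⟪βA, v⟫ = (l : ℝ)⁻¹ * lowSum βA (d - L + l) + ε' * T := by
      rw [inner_eq_sum]
      rw [Finset.sum_congr rfl fun k _ =>
        show βA k * v k = |βA k| * y k from by
          by_cases hk : k ∈ A
          · rw [hvapp, if_pos hk, one_mul, abs_of_nonneg (hsignA k hk)]
          · rw [hvapp, if_neg hk, abs_of_nonpos (hsignA' k hk)]; ring]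
      rw [← Equiv.sum_comp σ (fun k => |βA k| * y k)]
      rw [Finset.sum_congr rfl fun i _ =>
        show |βA (σ i)| * y (σ i) =
          (if ((i : ℕ)) < d - L + l then sortedAbs βA i else 0) * (l : ℝ)⁻¹ +
            sortedAbs βA i * ε' from by
          simp only [hy]
          rw [σ.symm_apply_apply]
          have hsa : |βA (σ i)| = sortedAbs βA i := by rw [hσ]; rfl
          rw [hsa]
          split_ifs with h <;> ring]
      rw [Finset.sum_add_distrib, ← Finset.sum_mul, ← Finset.sum_mul]
      rw [show (∑ i : Fin d, (if ((i : ℕ)) < d - L + l then sortedAbs βA i else 0)) =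
        lowSum βA (d - L + l) from rfl]
      rw [← hT]
      ring
    have h6 := hrreal v hvW
    rw [hinner] at h6
    have h7 : ε' * T ≤ ε := by
      rw [hε', div_mul_eq_mul_div, div_le_iff₀ (by linarith : (0 : ℝ) < T + 1)]
      nlinarith
    linarith
  refine ⟨⟨parta, hfeasβ, le_antisymm (parta βA hfeasβ) hup⟩, ?_⟩
  -- part (ii)
  intro γ hγdom hγcgf θ hθγdom hθγcgf hsA hsA'
  show _ ≤ ⨅ x ∈ closure (WSI L A), Vfun P X γ x
  refine le_iInf₂ fun x hx => ?_
  obtain ⟨hc1, hc2, hc3⟩ := mem_closure_WSI hx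
  have hkey : objSI L d θ ≤ ⟪θ, x⟫ := by
    rw [inner_abs_pattern A θ x hsA hsA' hc1 hc2]
    exact key_ineq hL1 hLd θ (fun k => |x k|) (fun k => abs_nonneg _) hc3
  calc ((ENNReal.ofReal (objSI L d θ) : ℝ≥0∞) : EReal) ≤ ((⟪θ, x⟫ : ℝ) : EReal) := by
        rw [EReal.coe_ennreal_ofReal]
        exact_mod_cast max_le hkey (le_trans (objSI_nonneg θ hL1 hLd) hkey)
    _ ≤ Vfun P X γ x :=
        le_iSup₂ (f := fun α (_ : α ∈ {α : Vec d | InDom P X γ ∧ InDom P X (α - γ) ∧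
            cgf P X γ + cgf P X (α - γ) ≤ 0}) => ((⟪α, x⟫ : ℝ) : EReal)) θ
          ⟨hγdom, hθγdom, add_nonpos hγcgf hθγcgf⟩

end Paper
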